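/- Let M be an automorphism of a finite-dimensional vector space V over an algebraically closed field k of characteristic not 2 preserving a non-degenerate symmetric bilinear form. Then for each even m ≥ 1 and each eigenvalue λ = ±1, the number of Jordan blocks of M of size m with eigenvalue λ is even. -/

import Mathlib

open Module LinearMap Submodule

section Aux

variable {k V : Type*} [Field k] [AddCommGroup V] [Module k V] [FiniteDimensional k V]

/-- Orthogonal complement w.r.t. a bilinear form. -/
noncomputable def BPerp (Ψ : V →ₗ[k] V →ₗ[k] k) (W : Submodule k V) : Submodule k V :=
  W.dualAnnihilator.comap Ψ

lemma mem_BPerp {Ψ : V →ₗ[k] V →ₗ[k] k} {W : Submodule k V} {u : V} :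
    u ∈ BPerp Ψ W ↔ ∀ w ∈ W, Ψ u w = 0 := by
  simp [BPerp, Submodule.mem_dualAnnihilator]

lemma finrank_dualAnn (W : Submodule k V) :
    finrank k W.dualAnnihilator + finrank k W = finrank k V := by
  have h1 := Submodule.finrank_quotient_add_finrank (M := Module.Dual k V) W.dualAnnihilator
  have h2 := (Subspace.quotAnnihilatorEquiv W).finrank_eq
  have h3 : finrank k (Module.Dual k W) = finrank k W := Subspace.dual_finrank_eq
  have h4 : finrank k (Module.Dual k V) = finrank k V := Subspace.dual_finrank_eq
  omega

lemma finrank_BPerp {Ψ : V →ₗ[k] V →ₗ[k] k}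
    (hnd : ∀ u : V, (∀ v : V, Ψ u v = 0) → u = 0) (W : Submodule k V) :
    finrank k (BPerp Ψ W) + finrank k W = finrank k V := by
  have hker : LinearMap.ker Ψ = ⊥ := by
    rw [eq_bot_iff]
    intro a ha
    simp only [LinearMap.mem_ker] at ha
    have := hnd a (fun v => by rw [ha]; rfl)
    simpa using this
  have hinj : Function.Injective Ψ := LinearMap.ker_eq_bot.mp hker
  have hsurj : Function.Surjective Ψ := by
    have hfr : finrank k V = finrank k (Module.Dual k V) := Subspace.dual_finrank_eq.symm
    exact (LinearMap.injective_iff_surjective_of_finrank_eq_finrank hfr).mp hinj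
  let e : V ≃ₗ[k] Module.Dual k V := LinearEquiv.ofBijective Ψ ⟨hinj, hsurj⟩
  have h1 : finrank k (BPerp Ψ W) = finrank k W.dualAnnihilator := by
    have : BPerp Ψ W = W.dualAnnihilator.comap (e : V →ₗ[k] Module.Dual k V) := rfl
    rw [this, Submodule.comap_equiv_eq_map_symm]
    exact (Submodule.equivMapOfInjective _ e.symm.injective _).finrank_eq.symm
  rw [h1]
  exact finrank_dualAnn W

lemma BPerp_inf {Ψ : V →ₗ[k] V →ₗ[k] k}
    (hnd : ∀ u : V, (∀ v : V, Ψ u v = 0) → u = 0) (W U : Submodule k V) :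
    BPerp Ψ (W ⊓ U) = BPerp Ψ W ⊔ BPerp Ψ U := by
  have hle : BPerp Ψ W ⊔ BPerp Ψ U ≤ BPerp Ψ (W ⊓ U) := by
    apply sup_le
    · intro x hx
      rw [mem_BPerp] at hx ⊢
      exact fun w hw => hx w hw.1
    · intro x hx
      rw [mem_BPerp] at hx ⊢
      exact fun w hw => hx w hw.2
  have hinfperp : BPerp Ψ W ⊓ BPerp Ψ U = BPerp Ψ (W ⊔ U) := by
    ext x
    simp only [Submodule.mem_inf, mem_BPerp]
    constructor
    · rintro ⟨h1, h2⟩ w hw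
      rcases Submodule.mem_sup.mp hw with ⟨a, ha, b, hb, rfl⟩
      rw [map_add, h1 a ha, h2 b hb, add_zero]
    · intro h
      exact ⟨fun w hw => h w (Submodule.mem_sup_left hw),
             fun w hw => h w (Submodule.mem_sup_right hw)⟩
  have e1 := finrank_BPerp hnd W
  have e2 := finrank_BPerp hnd U
  have e3 := finrank_BPerp hnd (W ⊔ U)
  have e4 := finrank_BPerp hnd (W ⊓ U)
  have e5 := Submodule.finrank_sup_add_finrank_inf_eq (BPerp Ψ W) (BPerp Ψ U)
  have e6 := Submodule.finrank_sup_add_finrank_inf_eq W U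
  rw [hinfperp] at e5
  have hfr : finrank k (BPerp Ψ (W ⊓ U)) ≤ finrank k ↥(BPerp Ψ W ⊔ BPerp Ψ U) := by omega
  exact (Submodule.eq_of_le_of_finrank_le hle hfr).symm

lemma even_finrank_of_skew {W : Type*} [AddCommGroup W] [Module k W] [FiniteDimensional k W]
    (hchar : (2 : k) ≠ 0) (B : W →ₗ[k] W →ₗ[k] k)
    (hskew : ∀ u v, B u v = - B v u)
    (hndB : ∀ u, (∀ v, B u v = 0) → u = 0) :
    Even (finrank k W) := by
  classical
  let b := finBasis k W
  have hndB' : LinearMap.BilinForm.Nondegenerate B :=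
    ⟨hndB, fun y hy => hndB y (fun v => by rw [hskew, hy, neg_zero])⟩
  have hdet : (BilinForm.toMatrix b B).det ≠ 0 :=
    (LinearMap.BilinForm.nondegenerate_iff_det_ne_zero b).mp hndB'
  set A := BilinForm.toMatrix b B with hA
  have hAT : A.transpose = -A := by
    ext i j
    simp only [Matrix.transpose_apply, Matrix.neg_apply, hA,
      LinearMap.BilinForm.toMatrix_apply]
    exact (LinearMap.BilinForm.toMatrix_apply b B j i).trans ((hskew (b j) (b i)).trans (congrArg Neg.neg (LinearMap.BilinForm.toMatrix_apply b B i j).symm))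
  have h1 : A.det = (-1 : k) ^ (finrank k W) * A.det := by
    conv_lhs => rw [← Matrix.det_transpose A, hAT]
    rw [Matrix.det_neg]
    simp
  rcases Nat.even_or_odd (finrank k W) with h | h
  · exact h
  · exfalso
    rw [h.neg_one_pow] at h1
    apply hdet
    have : (2 : k) * A.det = 0 := by linear_combination h1
    rcases mul_eq_zero.mp this with h' | h'
    · exact absurd h' hchar
    · exact h'

end Aux

/-- The number of Jordan blocks of `M` of eigenvalue `l` and size `m`
(computed, as an integer, from the dimensions of the kernels of powers of
`M - l·id`). -/
noncomputable def jordanBlockCount {k V : Type*} [Field k] [AddCommGroup V]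
    [Module k V] (M : V →ₗ[k] V) (l : k) (m : ℕ) : ℤ :=
  2 * (Module.finrank k (LinearMap.ker ((M - l • (1 : V →ₗ[k] V)) ^ m)) : ℤ)
    - (Module.finrank k (LinearMap.ker ((M - l • (1 : V →ₗ[k] V)) ^ (m - 1))) : ℤ)
    - (Module.finrank k (LinearMap.ker ((M - l • (1 : V →ₗ[k] V)) ^ (m + 1))) : ℤ)

/-- If an automorphism `M` of a finite-dimensional space over an algebraically
closed field of characteristic not 2 preserves a non-degenerate symmetric
bilinear form, then for each even size `m ≥ 1` and eigenvalue `±1` the number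
of Jordan blocks of that size and eigenvalue is even. -/
theorem jordan_blocks_pm_one_even {k V : Type*} [Field k]
    [IsAlgClosed k] [AddCommGroup V] [Module k V] [FiniteDimensional k V]
    (hchar : (2 : k) ≠ 0) (M : V ≃ₗ[k] V)
    (Ψ : V →ₗ[k] V →ₗ[k] k)
    (hsymm : ∀ u v, Ψ u v = Ψ v u)
    (hnd : ∀ u : V, (∀ v : V, Ψ u v = 0) → u = 0)
    (hM : ∀ u v, Ψ (M u) (M v) = Ψ u v)
    (l : k) (hl : l = 1 ∨ l = -1) (m : ℕ) (hm : 1 ≤ m) (hmeven : Even m) :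
    Even (jordanBlockCount (M : V →ₗ[k] V) l m) := by
  classical
  obtain ⟨m', rfl⟩ : ∃ m', m = m' + 1 := ⟨m - 1, by omega⟩
  set N : V →ₗ[k] V := (M : V →ₗ[k] V) - l • 1 with hNdef
  have hll : l * l = 1 := by rcases hl with h | h <;> rw [h] <;> ring
  have hl0 : l ≠ 0 := by
    rcases hl with h | h <;> rw [h]
    · exact one_ne_zero
    · exact neg_ne_zero.mpr one_ne_zero
  set Mi : V →ₗ[k] V := (M.symm : V →ₗ[k] V) with hMidef
  have hMiM : ∀ x : V, Mi ((M : V →ₗ[k] V) x) = x := fun x => M.symm_apply_apply x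
  have hMMi : ∀ x : V, (M : V →ₗ[k] V) (Mi x) = x := fun x => M.apply_symm_apply x
  have hNapp : ∀ x : V, N x = (M : V →ₗ[k] V) x - l • x := by
    intro x
    rw [hNdef]
    simp [LinearMap.sub_apply, LinearMap.smul_apply, Module.End.one_apply]
  have hMiker : ∀ x : V, N x = 0 → Mi x = l • x := by
    intro x hx
    have hMx : (M : V →ₗ[k] V) x = l • x := by
      have h := hNapp x
      rw [hx] at h
      exact (sub_eq_zero.mp h.symm)
    have h2 : x = l • Mi x := by
      conv_lhs => rw [← hMiM x, hMx, map_smul]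
    calc Mi x = (l * l) • Mi x := by rw [hll, one_smul]
    _ = l • (l • Mi x) := by rw [mul_smul]
    _ = l • x := by rw [← h2]
  set T : V →ₗ[k] V := (-l) • (Mi ∘ₗ N) with hTdef
  have hTapp : ∀ x : V, T x = (-l) • Mi (N x) := by
    intro x
    rw [hTdef]
    simp [LinearMap.smul_apply, LinearMap.comp_apply]
  have h1 : ∀ u v : V, Ψ ((M : V →ₗ[k] V) u) v = Ψ u (Mi v) := by
    intro u v
    have h := hM u (M.symm v)
    rw [M.apply_symm_apply] at h
    simpa [hMidef] using h
  have hstep : ∀ u v : V, Ψ (N u) v = Ψ u (T v) := by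
    intro u v
    have hTv : T v = (-l) • (v - l • Mi v) := by
      rw [hTapp, hNapp, map_sub, map_smul, hMiM]
    rw [hNapp u, hTv]
    rw [map_sub, LinearMap.sub_apply, map_smul, LinearMap.smul_apply, h1]
    rw [map_smul, map_sub, map_smul]
    simp only [smul_eq_mul]
    linear_combination (-(Ψ u (Mi v))) * hll
  have hpow : ∀ (j : ℕ) (u v : V), Ψ ((N ^ j) u) v = Ψ u ((T ^ j) v) := by
    intro j
    induction j with
    | zero => intro u v; simp
    | succ j ih =>
      intro u v
      rw [pow_succ, Module.End.mul_apply, ih, hstep, pow_succ', Module.End.mul_apply]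
  have hMiN : ∀ x : V, Mi (N x) = N (Mi x) := by
    intro x
    rw [hNapp, map_sub, map_smul, hMiM, hNapp, hMMi]
  have hMijN : ∀ (j : ℕ) (x : V), (Mi ^ j) (N x) = N ((Mi ^ j) x) := by
    intro j
    induction j with
    | zero => intro x; simp
    | succ j ih =>
      intro x
      rw [pow_succ, Module.End.mul_apply, Module.End.mul_apply, hMiN, ih]
  have hTj : ∀ (j : ℕ) (x : V), (T ^ j) x = ((-l) ^ j) • (Mi ^ j) ((N ^ j) x) := by
    intro j
    induction j with
    | zero => intro x; simp
    | succ j ih =>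
      intro x
      have e1 : Mi ((Mi ^ j) (N ((N ^ j) x))) = (Mi ^ (j + 1)) ((N ^ (j + 1)) x) := by
        rw [pow_succ' Mi, Module.End.mul_apply, pow_succ' N, Module.End.mul_apply]
      calc (T ^ (j + 1)) x = T ((T ^ j) x) := by rw [pow_succ', Module.End.mul_apply]
      _ = T ((-l) ^ j • (Mi ^ j) ((N ^ j) x)) := by rw [ih]
      _ = (-l) ^ j • T ((Mi ^ j) ((N ^ j) x)) := by rw [map_smul]
      _ = (-l) ^ j • ((-l) • Mi (N ((Mi ^ j) ((N ^ j) x)))) := by rw [hTapp]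
      _ = (-l) ^ j • ((-l) • Mi ((Mi ^ j) (N ((N ^ j) x)))) := by rw [← hMijN]
      _ = (-l) ^ (j + 1) • (Mi ^ (j + 1)) ((N ^ (j + 1)) x) := by
        rw [smul_smul, e1, ← pow_succ]
  have hTker : ∀ (j : ℕ) (x : V), (N ^ j) x = 0 → (T ^ j) x = 0 := by
    intro j x hx
    rw [hTj, hx, map_zero, smul_zero]
  have hMiInj : ∀ (j : ℕ) (y : V), (Mi ^ j) y = 0 → y = 0 := by
    intro j
    induction j with
    | zero => intro y hy; simpa using hy
    | succ j ih =>
      intro y hy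
      rw [pow_succ, Module.End.mul_apply] at hy
      have h2 := ih _ hy
      have := hMMi y
      rw [h2, map_zero] at this
      exact this.symm
  have hTker' : ∀ (j : ℕ) (x : V), (T ^ j) x = 0 → (N ^ j) x = 0 := by
    intro j x hx
    rw [hTj] at hx
    rcases smul_eq_zero.mp hx with h | h
    · exact absurd h (pow_ne_zero j (neg_ne_zero.mpr hl0))
    · exact hMiInj j _ h
  have hMijker : ∀ (j : ℕ) (x : V), N x = 0 → (Mi ^ j) x = (l ^ j) • x := by
    intro j
    induction j with
    | zero => intro x hx; simp
    | succ j ih =>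
      intro x hx
      have hNMix : N (Mi x) = 0 := by
        rw [hMiker x hx, map_smul, hx, smul_zero]
      rw [pow_succ, Module.End.mul_apply, hMiker x hx, map_smul, ih _ hx]
      rw [smul_smul, ← pow_succ']
  have hkerle : ∀ i j : ℕ, i ≤ j → LinearMap.ker (N ^ i) ≤ LinearMap.ker (N ^ j) := by
    intro i j hij x hx
    rw [LinearMap.mem_ker] at hx ⊢
    have hji : N ^ j = N ^ (j - i) * N ^ i := by
      rw [← pow_add]; congr 1; omega
    rw [hji, Module.End.mul_apply, hx, map_zero]
  -- perp computations
  have hperpRange : ∀ j : ℕ, BPerp Ψ (LinearMap.range (N ^ j)) = LinearMap.ker (N ^ j) := by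
    intro j
    ext u
    rw [mem_BPerp, LinearMap.mem_ker]
    constructor
    · intro h
      apply hTker' j
      apply hnd
      intro v
      have hv := h ((N ^ j) v) ⟨v, rfl⟩
      rw [hsymm u ((N ^ j) v), hpow j v u, hsymm v _] at hv
      exact hv
    · intro h w hw
      obtain ⟨v, rfl⟩ := hw
      rw [hsymm, hpow j v u, hTker j u h, map_zero]
  have hperpKer : BPerp Ψ (LinearMap.ker N) = LinearMap.range N := by
    have hle : LinearMap.range N ≤ BPerp Ψ (LinearMap.ker N) := by
      rintro _ ⟨w, rfl⟩
      rw [mem_BPerp]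
      intro x hx
      rw [LinearMap.mem_ker] at hx
      rw [hstep w x, hTapp, hx, map_zero, smul_zero, map_zero]
    have e1 := finrank_BPerp hnd (LinearMap.ker N)
    have e2 := LinearMap.finrank_range_add_finrank_ker N
    exact (Submodule.eq_of_le_of_finrank_le hle (by omega)).symm
  -- submodule identities
  have h2eq : m' + 2 = (m' + 1) + 1 := by omega
  have hmap1 : Submodule.map (N ^ m') (LinearMap.ker (N ^ (m' + 1)))
      = LinearMap.range (N ^ m') ⊓ LinearMap.ker N := by
    ext x
    simp only [Submodule.mem_map, Submodule.mem_inf, LinearMap.mem_range, LinearMap.mem_ker]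
    constructor
    · rintro ⟨w, hw, rfl⟩
      refine ⟨⟨w, rfl⟩, ?_⟩
      rw [← Module.End.mul_apply, ← pow_succ']
      exact hw
    · rintro ⟨⟨w, rfl⟩, hx⟩
      refine ⟨w, ?_, rfl⟩
      rw [pow_succ', Module.End.mul_apply]
      exact hx
  have hmap2 : LinearMap.ker (N ^ m') ⊓ Submodule.map N (LinearMap.ker (N ^ (m' + 2)))
      = Submodule.map N (LinearMap.ker (N ^ (m' + 1))) := by
    ext x
    simp only [Submodule.mem_inf, Submodule.mem_map, LinearMap.mem_ker]
    constructor
    · rintro ⟨hx, w, hw, rfl⟩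
      refine ⟨w, ?_, rfl⟩
      rw [pow_succ, Module.End.mul_apply]
      exact hx
    · rintro ⟨w, hw, rfl⟩
      refine ⟨?_, ⟨w, ?_, rfl⟩⟩
      · rw [← Module.End.mul_apply, ← pow_succ]
        exact hw
      · rw [h2eq, pow_succ', Module.End.mul_apply, hw, map_zero]
  have hrankmap : ∀ j : ℕ, LinearMap.ker N ≤ LinearMap.ker (N ^ j) →
      finrank k (Submodule.map N (LinearMap.ker (N ^ j))) + finrank k (LinearMap.ker N)
        = finrank k (LinearMap.ker (N ^ j)) := by
    intro j hj
    have hh1 : Submodule.map N (LinearMap.ker (N ^ j))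
        = LinearMap.range (N ∘ₗ (LinearMap.ker (N ^ j)).subtype) := by
      rw [LinearMap.range_comp, Submodule.range_subtype]
    have hh2 := LinearMap.finrank_range_add_finrank_ker (N ∘ₗ (LinearMap.ker (N ^ j)).subtype)
    have hh3 : LinearMap.ker (N ∘ₗ (LinearMap.ker (N ^ j)).subtype)
        = (LinearMap.ker N).comap (LinearMap.ker (N ^ j)).subtype := LinearMap.ker_comp _ _
    have hh4 : finrank k ((LinearMap.ker N).comap (LinearMap.ker (N ^ j)).subtype)
        = finrank k (LinearMap.ker N) := (Submodule.comapSubtypeEquivOfLe hj).finrank_eq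
    rw [hh1]
    rw [hh3, hh4] at hh2
    exact hh2
  have hkerN1 : ∀ j : ℕ, 1 ≤ j → LinearMap.ker N ≤ LinearMap.ker (N ^ j) := by
    intro j hj
    have := hkerle 1 j hj
    rwa [pow_one] at this
  -- the quotient space
  set K : Submodule k V := LinearMap.ker (N ^ (m' + 1)) with hKdef
  set S' : Submodule k V :=
    LinearMap.ker (N ^ m') ⊔ Submodule.map N (LinearMap.ker (N ^ (m' + 2))) with hS'def
  have hS'le : S' ≤ K := by
    rw [hS'def]
    apply sup_le
    · exact hkerle m' (m' + 1) (by omega)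
    · rintro _ ⟨w, hw, rfl⟩
      replace hw : (N ^ (m' + 2)) w = 0 := hw
      have hx : (N ^ (m' + 1)) (N w) = 0 := by
        rw [← Module.End.mul_apply, ← pow_succ, ← h2eq]
        exact hw
      exact LinearMap.mem_ker.mpr hx
  set SK : Submodule k K := S'.comap K.subtype with hSKdef
  set BK : K →ₗ[k] K →ₗ[k] k := LinearMap.compl₁₂ Ψ K.subtype ((N ^ m') ∘ₗ K.subtype)
    with hBKdef
  have hBK : ∀ u v : K, BK u v = Ψ (u : V) ((N ^ m') (v : V)) := fun u v => rfl
  have hKerK : ∀ u : K, (N ^ (m' + 1)) (u : V) = 0 := fun u => LinearMap.mem_ker.mp u.2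
  have hvanR : ∀ v : K, (v : V) ∈ S' → ∀ u : K, BK u v = 0 := by
    intro v hv u
    rw [hS'def] at hv
    rcases Submodule.mem_sup.mp hv with ⟨a, ha, b, hb, hab⟩
    rcases hb with ⟨w, hw, rfl⟩
    rw [LinearMap.mem_ker] at ha
    rw [hBK]
    have hsplit : (N ^ m') (v : V) = (N ^ (m' + 1)) w := by
      rw [← hab, map_add, ha, zero_add, ← Module.End.mul_apply, ← pow_succ]
    rw [hsplit, hsymm, hpow, hTker (m' + 1) _ (hKerK u), map_zero]
  have hvanL : ∀ u : K, (u : V) ∈ S' → ∀ v : K, BK u v = 0 := by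
    intro u hu v
    rw [hS'def] at hu
    rcases Submodule.mem_sup.mp hu with ⟨a, ha, b, hb, hab⟩
    rcases hb with ⟨w, hw, rfl⟩
    rw [LinearMap.mem_ker] at ha
    rw [hBK, ← hab, map_add, LinearMap.add_apply]
    have ht1 : Ψ a ((N ^ m') (v : V)) = 0 := by
      rw [hsymm, hpow, hTj, ha, map_zero, smul_zero, map_zero]
    have ht2 : Ψ (N w) ((N ^ m') (v : V)) = 0 := by
      have hN1 : N ((N ^ m') (v : V)) = 0 := by
        rw [← Module.End.mul_apply, ← pow_succ']
        exact hKerK v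
      rw [hstep, hTapp, hN1, map_zero, smul_zero, map_zero]
    rw [ht1, ht2, add_zero]
  have hodd : Odd m' := by
    rcases hmeven with ⟨t, ht⟩
    exact ⟨t - 1, by omega⟩
  have hskewK : ∀ u v : K, BK u v = - BK v u := by
    intro u v
    rw [hBK, hBK, hsymm, hpow]
    have hker1 : N ((N ^ m') (u : V)) = 0 := by
      rw [← Module.End.mul_apply, ← pow_succ']
      exact hKerK u
    have hx : (T ^ m') (u : V) = -((N ^ m') (u : V)) := by
      rw [hTj, hMijker m' _ hker1, smul_smul, ← mul_pow]
      have hm1 : -l * l = -1 := by rw [neg_mul, hll]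
      rw [hm1, hodd.neg_one_pow, neg_one_smul]
    rw [hx, map_neg]
  -- quotient form
  let f1 : K →ₗ[k] (K ⧸ SK →ₗ[k] k) :=
    { toFun := fun u => SK.liftQ (BK u) (by
        intro v hv
        rw [LinearMap.mem_ker]
        exact hvanR v hv u)
      map_add' := by
        intro a b
        refine Submodule.linearMap_qext _ ?_
        ext v
        simp [Submodule.liftQ_apply, map_add, LinearMap.add_apply]
      map_smul' := by
        intro c a
        refine Submodule.linearMap_qext _ ?_
        ext v
        simp [Submodule.liftQ_apply, map_smul, LinearMap.smul_apply] }
  have hf1ker : SK ≤ LinearMap.ker f1 := by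
    intro u hu
    rw [LinearMap.mem_ker]
    refine Submodule.linearMap_qext _ ?_
    ext v
    simp only [LinearMap.comp_apply, Submodule.mkQ_apply, LinearMap.zero_comp,
      LinearMap.zero_apply]
    show BK u v = 0
    exact hvanL u hu v
  set Bq : K ⧸ SK →ₗ[k] K ⧸ SK →ₗ[k] k := SK.liftQ f1 hf1ker with hBqdef
  have hBq : ∀ u v : K, Bq (SK.mkQ u) (SK.mkQ v) = BK u v := by
    intro u v
    rw [hBqdef]
    simp [Submodule.liftQ_apply, f1]
  have hmk : Function.Surjective SK.mkQ := Submodule.mkQ_surjective SK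
  have hskewQ : ∀ x y : K ⧸ SK, Bq x y = - Bq y x := by
    intro x y
    obtain ⟨u, rfl⟩ := hmk x
    obtain ⟨v, rfl⟩ := hmk y
    rw [hBq, hBq]
    exact hskewK u v
  have hndQ : ∀ x : K ⧸ SK, (∀ y : K ⧸ SK, Bq x y = 0) → x = 0 := by
    intro x hx
    obtain ⟨u, rfl⟩ := hmk x
    rw [Submodule.mkQ_apply, Submodule.Quotient.mk_eq_zero]
    show (u : V) ∈ S'
    have h0 : ∀ v : K, Ψ (u : V) ((N ^ m') (v : V)) = 0 := by
      intro v
      have := hx (SK.mkQ v)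
      rw [hBq, hBK] at this
      exact this
    have hu1 : (u : V) ∈ BPerp Ψ (Submodule.map (N ^ m') (LinearMap.ker (N ^ (m' + 1)))) := by
      rw [mem_BPerp]
      rintro w ⟨v, hv, rfl⟩
      exact h0 ⟨v, hv⟩
    rw [hmap1, BPerp_inf hnd, hperpRange m', hperpKer] at hu1
    rcases Submodule.mem_sup.mp hu1 with ⟨a, ha, b, hb, hab⟩
    rcases hb with ⟨w, rfl⟩
    rw [LinearMap.mem_ker] at ha
    have hw2 : w ∈ LinearMap.ker (N ^ (m' + 2)) := by
      rw [LinearMap.mem_ker, h2eq, pow_succ, Module.End.mul_apply]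
      have hNw : (N : V →ₗ[k] V) w = (u : V) - a := by
        rw [← hab]; abel
      rw [hNw, map_sub, hKerK u]
      have haa : (N ^ (m' + 1)) a = 0 := by
        rw [pow_succ', Module.End.mul_apply, ha, map_zero]
      rw [haa, sub_zero]
    rw [hS'def, ← hab]
    refine Submodule.add_mem_sup ?_ (Submodule.mem_map_of_mem hw2)
    rw [LinearMap.mem_ker]
    exact ha
  have hEvenQ : Even (finrank k (K ⧸ SK)) := even_finrank_of_skew hchar Bq hskewQ hndQ
  -- dimension counting
  have a1 : finrank k (K ⧸ SK) + finrank k SK = finrank k K :=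
    Submodule.finrank_quotient_add_finrank SK
  have a2 : finrank k SK = finrank k S' :=
    (Submodule.comapSubtypeEquivOfLe hS'le).finrank_eq
  have a3 := Submodule.finrank_sup_add_finrank_inf_eq
    (LinearMap.ker (N ^ m')) (Submodule.map N (LinearMap.ker (N ^ (m' + 2))))
  rw [hmap2] at a3
  have a4 := hrankmap (m' + 1) (hkerN1 (m' + 1) (by omega))
  have a5 := hrankmap (m' + 2) (hkerN1 (m' + 2) (by omega))
  obtain ⟨r, hr⟩ := hEvenQ
  have hjb : jordanBlockCount ((M : V →ₗ[k] V)) l (m' + 1) =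
      2 * (finrank k (LinearMap.ker (N ^ (m' + 1))) : ℤ)
        - (finrank k (LinearMap.ker (N ^ m')) : ℤ)
        - (finrank k (LinearMap.ker (N ^ (m' + 2))) : ℤ) := by
    rw [hNdef]
    rfl
  rw [hjb, Int.even_iff]
  have a1' : finrank k (K ⧸ SK) + finrank k SK
      = finrank k (LinearMap.ker (N ^ (m' + 1))) := a1
  have a3' : finrank k SK + finrank k (Submodule.map N (LinearMap.ker (N ^ (m' + 1))))
      = finrank k (LinearMap.ker (N ^ m'))
        + finrank k (Submodule.map N (LinearMap.ker (N ^ (m' + 2)))) := by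
    rw [a2]
    exact a3
  have final : ∀ q s A B C mp1 mp2 kN rr : ℕ, q + s = A → s + mp1 = B + mp2 →
      mp1 + kN = A → mp2 + kN = C → q = rr + rr →
      (2 * (A : ℤ) - (B : ℤ) - (C : ℤ)) % 2 = 0 := by
    intro q s A B C mp1 mp2 kN rr h1 h2 h3 h4 h5
    omega
  exact final _ _ _ _ _ _ _ _ _ a1' a3' a4 a5 hr
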